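/- Let I be an ideal on ℕ, p, q positive reals, and α, β nonnegative reals. Then the following are equivalent: (1) for every sequence (d_n) of positive reals, ∑ n^α d_n^p < ∞ implies that (n^β d_n^q) I-converges to 0; (2) the summable ideal generated by the sequence (n^{α − βp/q}) is contained in I. -/

import Mathlib

open Filter Set
open scoped Classical

/-- Mišík–Tóth theorem: for an ideal `I`, positive reals `p, q` and nonnegative reals
`α, β`, the following are equivalent:
(1) for every sequence `(d n)` of positive reals, `∑ n^α * d n ^ p < ∞` implies that
`(n^β * d n ^ q)` `I`-converges to `0`;
(2) the summable ideal generated by `(n ^ (α - β * p / q))` is contained in `I`. -/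
theorem misik_toth (I : Set (Set ℕ))
    (hfin : ∀ A : Set ℕ, A.Finite → A ∈ I)
    (hsub : ∀ A B : Set ℕ, A ⊆ B → B ∈ I → A ∈ I)
    (hunion : ∀ A B : Set ℕ, A ∈ I → B ∈ I → A ∪ B ∈ I)
    (huniv : (Set.univ : Set ℕ) ∉ I)
    (p q α β : ℝ) (hp : 0 < p) (hq : 0 < q) (hα : 0 ≤ α) (hβ : 0 ≤ β) :
    (∀ d : ℕ → ℝ, (∀ n, 0 < d n) →
      Summable (fun n : ℕ => (n : ℝ) ^ α * d n ^ p) →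
      ∀ ε > (0 : ℝ), {n : ℕ | ε ≤ |(n : ℝ) ^ β * d n ^ q|} ∈ I) ↔
    (∀ A : Set ℕ,
      Summable (A.indicator fun n : ℕ => (n : ℝ) ^ (α - β * p / q)) → A ∈ I) := by
  constructor
  · -- (1) → (2)
    intro h1 A hA
    set f : ℕ → ℝ := fun n => (n : ℝ) ^ (α - β * p / q) with hf
    set d : ℕ → ℝ := fun n =>
      if n ∈ A ∧ n ≠ 0 then (n : ℝ) ^ (-(β / q))
      else (2 : ℝ) ^ (-(n : ℝ)) * ((n : ℝ) + 1) ^ (-(α / p)) with hdef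
    have hdpos : ∀ n, 0 < d n := by
      intro n
      by_cases h : n ∈ A ∧ n ≠ 0
      · simp only [hdef, if_pos h]
        exact Real.rpow_pos_of_pos (Nat.cast_pos.mpr (Nat.pos_of_ne_zero h.2)) _
      · simp only [hdef, if_neg h]
        positivity
    have hgeo : ((2:ℝ) ^ (-p)) < 1 :=
      Real.rpow_lt_one_of_one_lt_of_neg one_lt_two (by linarith)
    have hle : ∀ n : ℕ, (n:ℝ)^α * d n ^ p ≤ A.indicator f n + ((2:ℝ)^(-p))^n := by
      intro n
      have hgn : (0:ℝ) ≤ ((2:ℝ)^(-p))^n := by positivity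
      by_cases h : n ∈ A ∧ n ≠ 0
      · have hn0 : (0:ℝ) < n := Nat.cast_pos.mpr (Nat.pos_of_ne_zero h.2)
        have heq : (n:ℝ)^α * d n ^ p = f n := by
          simp only [hdef, if_pos h, hf]
          rw [← Real.rpow_mul hn0.le, ← Real.rpow_add hn0]
          congr 1
          ring
        rw [heq, Set.indicator_of_mem h.1]
        linarith
      · have hind : (0:ℝ) ≤ A.indicator f n :=
          Set.indicator_nonneg (fun m _ => Real.rpow_nonneg (Nat.cast_nonneg m) _) n
        have hd1 : d n ^ p = (2:ℝ)^(-(n:ℝ)*p) * ((n:ℝ)+1)^(-α) := by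
          simp only [hdef, if_neg h]
          rw [Real.mul_rpow (by positivity) (by positivity),
            ← Real.rpow_mul (by norm_num : (0:ℝ) ≤ 2), ← Real.rpow_mul (by positivity)]
          rw [show -(α/p)*p = -α from by field_simp]
        have hgeq : ((2:ℝ)^(-p))^n = (2:ℝ)^(-(n:ℝ)*p) := by
          rw [← Real.rpow_natCast ((2:ℝ)^(-p)) n, ← Real.rpow_mul (by norm_num : (0:ℝ) ≤ 2)]
          congr 1
          ring
        have hone : (n:ℝ)^α * ((n:ℝ)+1)^(-α) ≤ 1 := by
          rw [Real.rpow_neg (by positivity)]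
          rw [mul_inv_le_iff₀ (by positivity), one_mul]
          exact Real.rpow_le_rpow (Nat.cast_nonneg n) (by linarith) hα
        have : (n:ℝ)^α * d n ^ p ≤ ((2:ℝ)^(-p))^n := by
          rw [hd1, hgeq]
          calc (n:ℝ)^α * ((2:ℝ)^(-(n:ℝ)*p) * ((n:ℝ)+1)^(-α))
              = ((n:ℝ)^α * ((n:ℝ)+1)^(-α)) * (2:ℝ)^(-(n:ℝ)*p) := by ring
            _ ≤ 1 * (2:ℝ)^(-(n:ℝ)*p) :=
                mul_le_mul_of_nonneg_right hone (by positivity)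
            _ = (2:ℝ)^(-(n:ℝ)*p) := one_mul _
        linarith
    have hsum : Summable (fun n : ℕ => (n:ℝ)^α * d n ^ p) :=
      Summable.of_nonneg_of_le (fun n => by positivity) hle
        (hA.add (summable_geometric_of_lt_one (by positivity) hgeo))
    have hS := h1 d hdpos hsum 1 one_pos
    have hAS : A ⊆ {n : ℕ | 1 ≤ |(n : ℝ) ^ β * d n ^ q|} ∪ {0} := by
      intro n hn
      by_cases h0 : n = 0
      · exact Or.inr (by simp [h0])
      · left
        have hn0 : (0:ℝ) < n := Nat.cast_pos.mpr (Nat.pos_of_ne_zero h0)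
        have : (n:ℝ)^β * d n ^ q = 1 := by
          simp only [hdef, if_pos (⟨hn, h0⟩ : n ∈ A ∧ n ≠ 0)]
          rw [← Real.rpow_mul hn0.le, ← Real.rpow_add hn0]
          rw [show β + -(β/q)*q = 0 from by field_simp; ring, Real.rpow_zero]
        simp only [Set.mem_setOf_eq, this, abs_one, le_refl]
    exact hsub _ _ hAS (hunion _ _ hS (hfin _ (finite_singleton 0)))
  · -- (2) → (1)
    intro h2 d hd hsum ε hε
    set S := {n : ℕ | ε ≤ |(n:ℝ)^β * d n ^ q|} with hSdef
    have habs : ∀ n : ℕ, |(n:ℝ)^β * d n ^ q| = (n:ℝ)^β * d n ^ q := by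
      intro n
      exact abs_of_nonneg (mul_nonneg (Real.rpow_nonneg (Nat.cast_nonneg n) _)
        (Real.rpow_nonneg (hd n).le _))
    have key : Summable ((S \ {0}).indicator (fun n : ℕ => (n:ℝ)^(α - β*p/q))) := by
      apply Summable.of_nonneg_of_le
        (fun n => Set.indicator_nonneg (fun m _ => Real.rpow_nonneg (Nat.cast_nonneg m) _) n)
        _ (hsum.mul_left (ε ^ (-(p/q))))
      intro n
      by_cases hn : n ∈ S \ {0}
      · rw [Set.indicator_of_mem hn]
        have hnne : n ≠ 0 := by simpa using hn.2
        have hn0 : (0:ℝ) < n := Nat.cast_pos.mpr (Nat.pos_of_ne_zero hnne)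
        have h1 : ε ≤ (n:ℝ)^β * d n ^ q := by
          have := hn.1
          rwa [hSdef, mem_setOf_eq, habs n] at this
        have h2' : ε ^ (p/q) ≤ (n:ℝ)^(β*(p/q)) * d n ^ p := by
          calc ε ^ (p/q) ≤ ((n:ℝ)^β * d n ^ q) ^ (p/q) :=
                Real.rpow_le_rpow hε.le h1 (by positivity)
            _ = (n:ℝ)^(β*(p/q)) * d n ^ p := by
                rw [Real.mul_rpow (Real.rpow_nonneg (Nat.cast_nonneg n) _)
                    (Real.rpow_nonneg (hd n).le _),
                  ← Real.rpow_mul (Nat.cast_nonneg n), ← Real.rpow_mul (hd n).le]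
                rw [show q * (p/q) = p from by field_simp]
        have hepos : (0:ℝ) < ε ^ (p/q) := Real.rpow_pos_of_pos hε _
        rw [Real.rpow_neg hε.le]
        calc (n:ℝ)^(α-β*p/q)
            = (ε^(p/q))⁻¹ * (ε^(p/q) * (n:ℝ)^(α-β*p/q)) := by field_simp
          _ ≤ (ε^(p/q))⁻¹ * (((n:ℝ)^(β*(p/q)) * d n ^ p) * (n:ℝ)^(α-β*p/q)) := by
              apply mul_le_mul_of_nonneg_left _ (by positivity)
              exact mul_le_mul_of_nonneg_right h2'
                (Real.rpow_nonneg (Nat.cast_nonneg n) _)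
          _ = (ε^(p/q))⁻¹ * ((n:ℝ)^α * d n ^ p) := by
              rw [mul_right_comm ((n:ℝ)^(β*(p/q))), ← Real.rpow_add hn0]
              rw [show β*(p/q) + (α - β*p/q) = α from by ring]
      · rw [Set.indicator_of_notMem hn]
        exact mul_nonneg (Real.rpow_nonneg hε.le _)
          (mul_nonneg (Real.rpow_nonneg (Nat.cast_nonneg n) _)
            (Real.rpow_nonneg (hd n).le _))
    have hS1 : S \ {0} ∈ I := h2 _ key
    have hsubset : S ⊆ (S \ {0}) ∪ {0} := by
      intro n hn
      by_cases h0 : n = 0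
      · exact Or.inr (by simp [h0])
      · exact Or.inl ⟨hn, by simp [h0]⟩
    exact hsub _ _ hsubset (hunion _ _ hS1 (hfin _ (finite_singleton 0)))
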